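/- Assume X satisfies UDP(S₀, κ₀, Δ) with 0 < κ₀ < 1/4, ‖X^⊤ε‖_∞ ≤ λ⁰, and λ_d > λ⁰/(1−4κ₀). Let β^d be the Dantzig selector for y = Xβ* + ε with parameter λ_d. Then for every s ≤ S₀ and subset S with |S| = s: ‖β^d − β*‖₁ ≤ (4/((1 − λ⁰/λ_d) − 4κ₀)) · (λ_d Δ² s + ‖β*_{S^c}‖₁). -/

import Mathlib

open Finset Matrix

/-- The ℓ¹ norm of a vector. -/
noncomputable def l1 {p : ℕ} (v : Fin p → ℝ) : ℝ := ∑ i, |v i|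

/-- The ℓ² norm of a vector. -/
noncomputable def l2 {n : ℕ} (v : Fin n → ℝ) : ℝ := Real.sqrt (∑ i, (v i) ^ 2)

/-- Restriction of a vector to a set of coordinates (zero elsewhere). -/
def restr {p : ℕ} (v : Fin p → ℝ) (S : Finset (Fin p)) : Fin p → ℝ :=
  fun i => if i ∈ S then v i else 0

/-- The Universal Distortion Property UDP(S₀, κ₀, Δ). -/
def UDP {n p : ℕ} (X : Matrix (Fin n) (Fin p) ℝ) (S₀ κ₀ Δ : ℝ) : Prop :=
  ∀ γ : Fin p → ℝ, ∀ s : ℕ, 1 ≤ s → (s : ℝ) ≤ S₀ →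
    ∀ S : Finset (Fin p), S.card = s →
      l1 (restr γ S) ≤ Δ * Real.sqrt s * l2 (X.mulVec γ) + κ₀ * l1 γ

lemma l1_restr' {p : ℕ} (v : Fin p → ℝ) (S : Finset (Fin p)) :
    l1 (restr v S) = ∑ i ∈ S, |v i| := by
  unfold l1 restr
  rw [← Finset.sum_add_sum_compl S]
  have h0 : ∑ i ∈ Sᶜ, |if i ∈ S then v i else 0| = 0 := by
    apply Finset.sum_eq_zero
    intro i hi
    rw [Finset.mem_compl] at hi
    simp [hi]
  rw [h0, add_zero]
  exact Finset.sum_congr rfl (fun i hi => by simp [hi])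

lemma amgm_aux (lamd z A : ℝ) : 4 * lamd * (A * z) ≤ z ^ 2 + 4 * lamd ^ 2 * A ^ 2 := by
  nlinarith [sq_nonneg (z - 2 * lamd * A)]

lemma l1_split {p : ℕ} (v : Fin p → ℝ) (S : Finset (Fin p)) :
    l1 v = ∑ i ∈ S, |v i| + ∑ i ∈ Sᶜ, |v i| := by
  unfold l1
  exact (Finset.sum_add_sum_compl S _).symm

/-- Oracle inequality in ℓ¹ risk for the Dantzig selector under UDP (de Castro, Thm 2.4). -/
theorem stmt_9 (n p : ℕ) (X : Matrix (Fin n) (Fin p) ℝ)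
    (S₀ κ₀ Δ : ℝ) (hκ₀ : 0 < κ₀ ∧ κ₀ < 1/4) (hudp : UDP X S₀ κ₀ Δ)
    (βstar βd : Fin p → ℝ) (ε y : Fin n → ℝ) (lamd lam0 : ℝ)
    (hy : y = X.mulVec βstar + ε)
    (hnoise : ∀ j, |Xᵀ.mulVec ε j| ≤ lam0) (hlam0 : 0 ≤ lam0)
    (hlam : lamd > lam0 / (1 - 4 * κ₀))
    (hfeas : ∀ j, |Xᵀ.mulVec (y - X.mulVec βd) j| ≤ lamd)
    (hmin : ∀ β : Fin p → ℝ, (∀ j, |Xᵀ.mulVec (y - X.mulVec β) j| ≤ lamd) →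
      l1 βd ≤ l1 β) :
    ∀ s : ℕ, 1 ≤ s → (s : ℝ) ≤ S₀ → ∀ S : Finset (Fin p), S.card = s →
      l1 (βd - βstar)
        ≤ (4 / ((1 - lam0 / lamd) - 4 * κ₀)) * (lamd * Δ ^ 2 * s + l1 (restr βstar Sᶜ)) := by
  obtain ⟨hκpos, hκlt⟩ := hκ₀
  intro s hs1 hsS S hScard
  have h4κ : (0:ℝ) < 1 - 4 * κ₀ := by linarith
  have hlamd_pos : 0 < lamd :=
    lt_of_le_of_lt (div_nonneg hlam0 h4κ.le) hlam
  have hlam0d : lam0 < lamd * (1 - 4 * κ₀) := (div_lt_iff₀ h4κ).mp hlam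
  have hlam0le : lam0 ≤ lamd := by nlinarith
  set h : Fin p → ℝ := βd - βstar with hh
  set L : ℝ := l1 h with hL
  set B : ℝ := l1 (restr βstar Sᶜ) with hB
  set z : ℝ := l2 (X.mulVec h) with hz
  set c : ℝ := (1 - lam0 / lamd) - 4 * κ₀ with hc
  have hcpos : 0 < c := by
    rw [hc]
    have : lam0 / lamd < 1 - 4 * κ₀ := by
      rw [div_lt_iff₀ hlamd_pos]
      nlinarith
    linarith
  -- Step A : βstar is feasible, hence l1 βd ≤ l1 βstar
  have hfeasβ : ∀ j, |Xᵀ.mulVec (y - X.mulVec βstar) j| ≤ lamd := by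
    intro j
    have : y - X.mulVec βstar = ε := by rw [hy]; abel
    rw [this]
    exact le_trans (hnoise j) hlam0le
  have hAmin : l1 βd ≤ l1 βstar := hmin βstar hfeasβ
  -- Step B : cone inequality
  have hsplitd := l1_split βd S
  have hsplitstar := l1_split βstar S
  have hsplith := l1_split h S
  have hBval : B = ∑ i ∈ Sᶜ, |βstar i| := l1_restr' βstar Sᶜ
  have hb1 : ∑ i ∈ S, |βstar i| ≤ ∑ i ∈ S, |βd i| + ∑ i ∈ S, |h i| := by
    rw [← Finset.sum_add_distrib]
    apply Finset.sum_le_sum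
    intro i _
    have : βstar i = βd i - h i := by simp [hh]
    rw [this]
    exact abs_sub _ _
  have hb2 : ∑ i ∈ Sᶜ, |h i| ≤ ∑ i ∈ Sᶜ, |βd i| + ∑ i ∈ Sᶜ, |βstar i| := by
    rw [← Finset.sum_add_distrib]
    apply Finset.sum_le_sum
    intro i _
    have : h i = βd i - βstar i := by simp [hh]
    rw [this]
    exact abs_sub _ _
  have hcone : L ≤ 2 * (∑ i ∈ S, |h i|) + 2 * B := by
    rw [hL, hsplith, hBval]
    linarith [hAmin, hsplitd, hsplitstar, hb1, hb2]
  -- Step C : energy bound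
  have hXh : X.mulVec h = ε - (y - X.mulVec βd) := by
    rw [hh, Matrix.mulVec_sub, hy]
    funext i
    simp [Pi.sub_apply, Pi.add_apply]
    ring
  have hG : ∀ i, |Xᵀ.mulVec (X.mulVec h) i| ≤ lamd + lam0 := by
    intro i
    rw [hXh, Matrix.mulVec_sub]
    calc |(Xᵀ.mulVec ε - Xᵀ.mulVec (y - X.mulVec βd)) i|
        ≤ |Xᵀ.mulVec ε i| + |Xᵀ.mulVec (y - X.mulVec βd) i| := abs_sub _ _
      _ ≤ lam0 + lamd := add_le_add (hnoise i) (hfeas i)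
      _ = lamd + lam0 := by ring
  have hE : ∑ j, (X.mulVec h j) ^ 2 = ∑ i, h i * (Xᵀ.mulVec (X.mulVec h) i) := by
    simp only [Matrix.mulVec, Matrix.transpose_apply, dotProduct, Finset.mul_sum]
    rw [Finset.sum_comm]
    apply Finset.sum_congr rfl
    intro j _
    rw [pow_two, Finset.sum_mul]
    apply Finset.sum_congr rfl
    intro i _
    rw [Finset.mul_sum]
    apply Finset.sum_congr rfl
    intro k _
    ring
  have hLnn : 0 ≤ L := Finset.sum_nonneg (fun i _ => abs_nonneg _)
  have hBnn : 0 ≤ B := Finset.sum_nonneg (fun i _ => abs_nonneg _)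
  have hEbound : ∑ j, (X.mulVec h j) ^ 2 ≤ (lamd + lam0) * L := by
    rw [hE]
    calc ∑ i, h i * (Xᵀ.mulVec (X.mulVec h) i)
        ≤ ∑ i, |h i| * (lamd + lam0) := by
          apply Finset.sum_le_sum
          intro i _
          calc h i * (Xᵀ.mulVec (X.mulVec h) i)
              ≤ |h i * (Xᵀ.mulVec (X.mulVec h) i)| := le_abs_self _
            _ = |h i| * |Xᵀ.mulVec (X.mulVec h) i| := abs_mul _ _
            _ ≤ |h i| * (lamd + lam0) :=
                mul_le_mul_of_nonneg_left (hG i) (abs_nonneg _)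
      _ = (lamd + lam0) * L := by rw [← Finset.sum_mul, hL]; unfold l1; ring
  have hznn : 0 ≤ z := Real.sqrt_nonneg _
  have hzsq : z ^ 2 ≤ (lamd + lam0) * L := by
    rw [hz]
    unfold l2
    rw [Real.sq_sqrt (Finset.sum_nonneg (fun j _ => sq_nonneg _))]
    exact hEbound
  -- Step D : UDP
  have hudpS := hudp h s hs1 hsS S hScard
  rw [l1_restr' h S, ← hz, ← hL] at hudpS
  -- abbreviations
  set a : ℝ := Δ * Real.sqrt s with ha
  have ha2 : a ^ 2 = Δ ^ 2 * s := by
    rw [ha, mul_pow, Real.sq_sqrt (Nat.cast_nonneg s)]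
  clear_value h L B z c a
  clear hudp hmin hfeas hnoise hfeasβ hXh hG hE hEbound hy hAmin hsplitd hsplitstar hsplith hb1 hb2 hz hL hh hB hBval
  have h1 : (1 - 2 * κ₀) * L ≤ 2 * (a * z) + 2 * B := by linarith [hcone, hudpS]
  have h2 : a * z ≤ |a| * z := mul_le_mul_of_nonneg_right (le_abs_self a) hznn
  have h3 : 4 * lamd * (|a| * z) ≤ z ^ 2 + 4 * lamd ^ 2 * a ^ 2 := by
    have := amgm_aux lamd z |a|
    rwa [sq_abs] at this
  have h5 : 2 * lamd * ((1 - 2 * κ₀) * L) ≤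
      (lamd + lam0) * L + 4 * lamd ^ 2 * (Δ ^ 2 * s) + 4 * lamd * B := by
    have e1 := mul_le_mul_of_nonneg_left h1 (by linarith : (0:ℝ) ≤ 2 * lamd)
    have e2 := mul_le_mul_of_nonneg_left h2 (by linarith : (0:ℝ) ≤ 4 * lamd)
    rw [← ha2]
    linarith [e1, e2, h3, hzsq]
  have hcl : lamd * c = lamd - lam0 - 4 * κ₀ * lamd := by
    rw [hc]
    field_simp
  have h6 : (lamd - lam0 - 4 * κ₀ * lamd) * L ≤ 4 * lamd * (lamd * Δ ^ 2 * s + B) := by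
    linarith [h5]
  have hkey : lamd * (c * L) ≤ lamd * (4 * (lamd * Δ ^ 2 * s + B)) := by
    have heq : lamd * (c * L) = (lamd - lam0 - 4 * κ₀ * lamd) * L := by
      rw [← mul_assoc, hcl]
    rw [heq]
    linarith [h6]
  have hfin : c * L ≤ 4 * (lamd * Δ ^ 2 * s + B) :=
    le_of_mul_le_mul_left hkey hlamd_pos
  have : L ≤ 4 / c * (lamd * Δ ^ 2 * s + B) := by
    rw [div_mul_eq_mul_div, le_div_iff₀ hcpos]
    linarith [hfin]
  exact this
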